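/- arXiv:0707.4297 — 2 statements merged into one kernel-verified Lean document; each statement's English description precedes it below -/
import Mathlib

section
/- Let H and H' be complex Hilbert spaces, let A : H → H and B : H' → H' be bounded self-adjoint positive invertible operators, and let J : H' → H be a bounded operator such that ⟪B x, y⟫ = ⟪A (J x), J y⟫ for all x, y ∈ H'. Then A⁻¹ − J ∘ B⁻¹ ∘ J* is a positive operator on H, i.e. J B⁻¹ J* ≤ A⁻¹. (Bounded-operator form of Proposition 2.1(i).) -/
open scoped InnerProductSpace

open RCLike ContinuousLinearMap

lemma pos_cs {H : Type*} [NormedAddCommGroup H] [InnerProductSpace ℂ H] [CompleteSpace H]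
    (A : H →L[ℂ] H) (hA : A.IsPositive) (a b : H) :
    ‖⟪A a, b⟫_ℂ‖ * ‖⟪A b, a⟫_ℂ‖ ≤ re ⟪A a, a⟫_ℂ * re ⟪A b, b⟫_ℂ := by
  have hsymm : A.IsSymmetric := hA.isSelfAdjoint.isSymmetric
  letI core : PreInnerProductSpace.Core ℂ H :=
  { inner := fun x y => ⟪A x, y⟫_ℂ
    conj_inner_symm := fun x y => by
      simp only [← inner_conj_symm (A y) x, starRingEnd_self_apply]
      exact (hsymm x y).symm
    re_inner_nonneg := fun x => hA.2 x
    add_left := fun x y z => by simp [inner_add_left]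
    smul_left := fun x y r => by simp [inner_smul_left, mul_comm] }
  exact @InnerProductSpace.Core.inner_mul_inner_self_le ℂ H _ _ _ core a b


/-- Bounded-operator form of Proposition 2.1(i): if the quadratic form of `B`
agrees with that of `A` through `J`, then `J B⁻¹ J* ≤ A⁻¹`. -/
theorem stmt0
    {H H' : Type*} [NormedAddCommGroup H] [InnerProductSpace ℂ H] [CompleteSpace H]
    [NormedAddCommGroup H'] [InnerProductSpace ℂ H'] [CompleteSpace H']
    (A A' : H →L[ℂ] H) (B B' : H' →L[ℂ] H') (J : H' →L[ℂ] H)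
    (hA : A.IsPositive) (hB : B.IsPositive)
    (hAinv : A.comp A' = ContinuousLinearMap.id ℂ H)
    (hAinv' : A'.comp A = ContinuousLinearMap.id ℂ H)
    (hBinv : B.comp B' = ContinuousLinearMap.id ℂ H')
    (hBinv' : B'.comp B = ContinuousLinearMap.id ℂ H')
    (hform : ∀ x y : H', ⟪B x, y⟫_ℂ = ⟪A (J x), J y⟫_ℂ) :
    (A' - J.comp (B'.comp (ContinuousLinearMap.adjoint J))).IsPositive := by
  have hAsa : IsSelfAdjoint A := hA.isSelfAdjoint
  have hBsa : IsSelfAdjoint B := hB.isSelfAdjoint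
  have hA'sa : IsSelfAdjoint A' := by
    rw [isSelfAdjoint_iff']
    calc adjoint A' = (adjoint A').comp (A.comp A') := by rw [hAinv, comp_id]
      _ = ((adjoint A').comp A).comp A' := by rw [comp_assoc]
      _ = (adjoint (A.comp A')).comp A' := by
          rw [adjoint_comp, hAsa.adjoint_eq]
      _ = A' := by rw [hAinv, adjoint_id, id_comp]
  have hB'sa : IsSelfAdjoint B' := by
    rw [isSelfAdjoint_iff']
    calc adjoint B' = (adjoint B').comp (B.comp B') := by rw [hBinv, comp_id]
      _ = ((adjoint B').comp B).comp B' := by rw [comp_assoc]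
      _ = (adjoint (B.comp B')).comp B' := by
          rw [adjoint_comp, hBsa.adjoint_eq]
      _ = B' := by rw [hBinv, adjoint_id, id_comp]
  have hAsymm : ∀ a b : H, ⟪A a, b⟫_ℂ = ⟪a, A b⟫_ℂ := fun a b => hAsa.isSymmetric a b
  have hBsymm : ∀ a b : H', ⟪B a, b⟫_ℂ = ⟪a, B b⟫_ℂ := fun a b => hBsa.isSymmetric a b
  have hA'pos : A'.IsPositive := by
    have h : A' = (adjoint A').comp (A.comp A') := by
      rw [hA'sa.adjoint_eq, ← comp_assoc, hAinv', id_comp]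
    rw [h]
    exact hA.adjoint_conj A'
  constructor
  · have hT : IsSelfAdjoint (J.comp (B'.comp (adjoint J))) := by
      rw [isSelfAdjoint_iff', adjoint_comp, adjoint_comp, adjoint_adjoint,
        hB'sa.adjoint_eq, comp_assoc]
    exact (hA'sa.sub hT).isSymmetric
  · intro x
    set u : H' := (adjoint J) x with hu
    set y : H' := B' u with hy
    have hBy : B y = u := by
      have := congrArg (fun f => f u) hBinv
      simpa using this
    have hx : A (A' x) = x := by
      have := congrArg (fun f => f x) hAinv
      simpa using this
    have hkey : ⟪(J.comp (B'.comp (adjoint J))) x, x⟫_ℂ = ⟪B y, y⟫_ℂ := by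
      simp only [comp_apply, ← hu, ← hy]
      rw [← ContinuousLinearMap.adjoint_inner_right J, ← hu, ← hBy]
      exact (hBsymm y y).symm
    have h2 : ⟪A (J y), A' x⟫_ℂ = ⟪B y, y⟫_ℂ := by
      rw [hAsymm (J y) (A' x), hx, ← ContinuousLinearMap.adjoint_inner_right J,
        ← hu, ← hBy]
      exact (hBsymm y y).symm
    have hc : (0:ℝ) ≤ re ⟪B y, y⟫_ℂ := hB.2 y
    have hd : (0:ℝ) ≤ re ⟪A' x, x⟫_ℂ := hA'pos.2 x
    have hcs := pos_cs A hA (J y) (A' x)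
    rw [← hform y y] at hcs
    rw [hx] at hcs
    have hswap : ‖⟪x, J y⟫_ℂ‖ = ‖⟪B y, y⟫_ℂ‖ := by
      rw [← h2, hAsymm (J y) (A' x), hx, ← norm_inner_symm]
    rw [h2, hswap] at hcs
    have hre2 : re ⟪x, A' x⟫_ℂ = re ⟪A' x, x⟫_ℂ := by
      rw [← inner_conj_symm (A' x) x, conj_re]
    rw [hre2] at hcs
    have hle : re ⟪B y, y⟫_ℂ ≤ re ⟪A' x, x⟫_ℂ := by
      have hnc : re ⟪B y, y⟫_ℂ ≤ ‖⟪B y, y⟫_ℂ‖ := re_le_norm _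
      rcases eq_or_lt_of_le hc with h0 | h0
      · rw [← h0]; exact hd
      · have : re ⟪B y, y⟫_ℂ * re ⟪B y, y⟫_ℂ ≤
            re ⟪B y, y⟫_ℂ * re ⟪A' x, x⟫_ℂ := by
          nlinarith [norm_nonneg (⟪B y, y⟫_ℂ)]
        exact le_of_mul_le_mul_left this h0
    have hgoal : (A' - J.comp (B'.comp (adjoint J))).reApplyInnerSelf x
        = re ⟪A' x, x⟫_ℂ - re ⟪B y, y⟫_ℂ := by
      rw [reApplyInnerSelf_apply, sub_apply, inner_sub_left, hkey, map_sub]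
    rw [hgoal]
    linarith
end

section
/- Let s > 0 and β > 0. Then there exists a finite-dimensional subspace F of L²(0, s) such that every continuously differentiable function u : [0, s] → ℂ satisfying ∫₀ˢ u(t)·conj(g(t)) dt = 0 for all g ∈ F obeys ∫₀ˢ |u(t)|² dt ≤ β² · ∫₀ˢ |u'(t)|² dt. (Inequality (4.7) of the paper: a Poincaré-type inequality on a subspace of finite codimension, deduced from the compactness of the embedding H¹(0,s) ⊂ L²(0,s).) -/
open MeasureTheory Set

lemma piece (s : ℝ) (u : ℝ → ℂ) (hu : ContDiffOn ℝ 1 u (Set.Icc 0 s))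
    (a b : ℝ) (ha : 0 ≤ a) (hb : b ≤ s) (hab : a < b)
    (hmean : ∫ t in Set.Ioo a b, u t = 0) :
    ∫ t in Set.Ioo a b, ‖u t‖ ^ 2
      ≤ (b - a) ^ 2 * ∫ t in Set.Ioo a b, ‖derivWithin u (Set.Icc 0 s) t‖ ^ 2 := by
  have hs : 0 < s := lt_of_lt_of_le (lt_of_le_of_lt ha hab) hb
  set u' := derivWithin u (Set.Icc 0 s) with hu'def
  have hsub : Set.Icc a b ⊆ Set.Icc 0 s := Set.Icc_subset_Icc ha hb
  have hosub : Set.Ioo a b ⊆ Set.Ioo 0 s := Set.Ioo_subset_Ioo ha hb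
  have hucont : ContinuousOn u (Set.Icc 0 s) := hu.continuousOn
  have hu'cont : ContinuousOn u' (Set.Icc 0 s) :=
    hu.continuousOn_derivWithin (uniqueDiffOn_Icc hs) le_rfl
  have hu'normint : IntegrableOn (fun t => ‖u' t‖) (Set.Ioo a b) :=
    ((hu'cont.mono hsub).norm.integrableOn_Icc).mono_set Set.Ioo_subset_Icc_self
  have huint : IntegrableOn u (Set.Ioo a b) :=
    ((hucont.mono hsub).integrableOn_Icc).mono_set Set.Ioo_subset_Icc_self
  have hu'sqint : IntegrableOn (fun t => ‖u' t‖ ^ 2) (Set.Ioo a b) :=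
    (((hu'cont.mono hsub).norm.pow 2).integrableOn_Icc).mono_set Set.Ioo_subset_Icc_self
  have husqint : IntegrableOn (fun t => ‖u t‖ ^ 2) (Set.Ioo a b) :=
    (((hucont.mono hsub).norm.pow 2).integrableOn_Icc).mono_set Set.Ioo_subset_Icc_self
  have hconstint : IntegrableOn (fun _ : ℝ => (1 : ℂ)) (Set.Ioo a b) :=
    integrableOn_const measure_Ioo_lt_top.ne
  set A := ∫ t in Set.Ioo a b, ‖u' t‖ with hA
  have hAnonneg : 0 ≤ A := setIntegral_nonneg measurableSet_Ioo fun t _ => norm_nonneg _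
  set I := ∫ t in Set.Ioo a b, ‖u' t‖ ^ 2 with hI
  have hInonneg : 0 ≤ I := setIntegral_nonneg measurableSet_Ioo fun t _ => sq_nonneg _
  -- FTC difference bound
  have hdiff : ∀ x ∈ Set.Ioo a b, ∀ y ∈ Set.Ioo a b, ‖u x - u y‖ ≤ A := by
    intro x hx y hy
    have huIcc : Set.uIcc y x ⊆ Set.Ioo a b := Set.ordConnected_Ioo.uIcc_subset hy hx
    have hderiv : ∀ t ∈ Set.uIcc y x, HasDerivAt u (u' t) t := by
      intro t ht
      have ht' : t ∈ Set.Ioo 0 s := hosub (huIcc ht)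
      have hmem : Set.Icc 0 s ∈ nhds t := Icc_mem_nhds ht'.1 ht'.2
      exact ((hu.differentiableOn one_ne_zero t
        (Set.Ioo_subset_Icc_self ht')).hasDerivWithinAt).hasDerivAt hmem
    have hint : IntervalIntegrable u' volume y x :=
      (hu'cont.mono ((huIcc.trans hosub).trans Set.Ioo_subset_Icc_self)).intervalIntegrable
    have hftc : ∫ t in y..x, u' t = u x - u y :=
      intervalIntegral.integral_eq_sub_of_hasDerivAt hderiv hint
    rw [← hftc]
    refine le_trans (intervalIntegral.norm_integral_le_abs_integral_norm) ?_
    rcases le_total y x with h | h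
    · rw [intervalIntegral.integral_of_le h, abs_of_nonneg
        (setIntegral_nonneg measurableSet_Ioc fun t _ => norm_nonneg _)]
      exact setIntegral_mono_set hu'normint
        (Filter.Eventually.of_forall fun t => norm_nonneg _)
        ((Set.Ioc_subset_Icc_self.trans (Set.uIcc_of_le h ▸ huIcc)).eventuallyLE)
    · rw [intervalIntegral.integral_of_ge h, abs_neg, abs_of_nonneg
        (setIntegral_nonneg measurableSet_Ioc fun t _ => norm_nonneg _)]
      exact setIntegral_mono_set hu'normint
        (Filter.Eventually.of_forall fun t => norm_nonneg _)
        ((Set.Ioc_subset_Icc_self.trans (Set.uIcc_of_ge h ▸ huIcc)).eventuallyLE)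
  have hvol : volume.real (Set.Ioo a b) = b - a := by
    rw [measureReal_def, Real.volume_Ioo, ENNReal.toReal_ofReal (by linarith)]
  -- mean value bound
  have hpt : ∀ x ∈ Set.Ioo a b, ‖u x‖ ≤ A := by
    intro x hx
    have h1 : ∫ y in Set.Ioo a b, (u x - u y) = (b - a) • u x := by
      rw [integral_sub (μ := volume.restrict (Set.Ioo a b)) (integrableOn_const (by simp) :
        IntegrableOn (fun _ => u x) (Set.Ioo a b) volume) huint, hmean,
        sub_zero, setIntegral_const, hvol]
    have h2 : (b - a) * ‖u x‖ ≤ (b - a) * A := by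
      have hn := norm_integral_le_integral_norm
        (f := fun y => u x - u y) (μ := volume.restrict (Set.Ioo a b))
      rw [h1, norm_smul, Real.norm_of_nonneg (by linarith : (0:ℝ) ≤ b - a)] at hn
      refine hn.trans ?_
      have : ∫ y in Set.Ioo a b, ‖u x - u y‖ ≤ ∫ _ in Set.Ioo a b, A :=
        setIntegral_mono_on
          ((integrableOn_const measure_Ioo_lt_top.ne).sub huint).norm
          (integrableOn_const measure_Ioo_lt_top.ne)
          measurableSet_Ioo (fun y hy => hdiff x hx y hy)
      rwa [setIntegral_const, hvol, smul_eq_mul] at this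
    exact le_of_mul_le_mul_left h2 (by linarith)
  -- Cauchy-Schwarz
  have hCS : A ^ 2 ≤ (b - a) * I := by
    have hconj : Real.HolderConjugate 2 2 := ⟨by norm_num, by norm_num, by norm_num⟩
    have hfin : IsFiniteMeasure (volume.restrict (Set.Ioo a b)) :=
      ⟨by rw [Measure.restrict_apply_univ]; exact measure_Ioo_lt_top⟩
    obtain ⟨C, hC⟩ := isCompact_Icc.exists_bound_of_continuousOn
      ((hu'cont.mono hsub).norm)
    have haem : AEStronglyMeasurable (fun t => ‖u' t‖) (volume.restrict (Set.Ioo a b)) :=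
      ((hu'cont.mono hsub).norm.mono Set.Ioo_subset_Icc_self).aestronglyMeasurable
        measurableSet_Ioo
    have hf2 : MemLp (fun t => ‖u' t‖) (ENNReal.ofReal 2) (volume.restrict (Set.Ioo a b)) :=
      MemLp.of_bound haem C (by
        filter_upwards [ae_restrict_mem measurableSet_Ioo] with t ht
        exact hC t (Set.Ioo_subset_Icc_self ht))
    have hg2 : MemLp (fun _ : ℝ => (1:ℝ)) (ENNReal.ofReal 2) (volume.restrict (Set.Ioo a b)) :=
      memLp_const 1
    have h := integral_mul_le_Lp_mul_Lq_of_nonneg hconj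
      (Filter.Eventually.of_forall fun t => norm_nonneg (u' t))
      (Filter.Eventually.of_forall fun _ => zero_le_one) hf2 hg2
    simp only [mul_one, Real.one_rpow] at h
    have h1 : ∫ t in Set.Ioo a b, ‖u' t‖ ^ (2:ℝ) = I := by
      rw [hI]; exact integral_congr_ae (Filter.Eventually.of_forall fun t => Real.rpow_two _)
    have h2 : ∫ _ in Set.Ioo a b, (1:ℝ) = b - a := by
      rw [setIntegral_const, hvol, smul_eq_mul, mul_one]
    rw [h1, h2] at h
    have hsq := pow_le_pow_left₀ hAnonneg h 2
    have e : ∀ x : ℝ, 0 ≤ x → (x ^ ((1:ℝ)/2)) ^ 2 = x := fun x hx => by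
      rw [← Real.rpow_natCast (x ^ ((1:ℝ)/2)) 2, ← Real.rpow_mul hx]; norm_num
    rw [mul_pow, e I hInonneg, e (b - a) (by linarith)] at hsq
    linarith
  -- combine
  calc ∫ t in Set.Ioo a b, ‖u t‖ ^ 2 ≤ ∫ _ in Set.Ioo a b, A ^ 2 :=
        setIntegral_mono_on husqint (integrableOn_const measure_Ioo_lt_top.ne)
          measurableSet_Ioo (fun x hx => pow_le_pow_left₀ (norm_nonneg _) (hpt x hx) 2)
    _ = (b - a) * A ^ 2 := by rw [setIntegral_const, hvol, smul_eq_mul]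
    _ ≤ (b - a) * ((b - a) * I) := by
        have := mul_le_mul_of_nonneg_left hCS (by linarith : (0:ℝ) ≤ b - a)
        linarith
    _ = (b - a) ^ 2 * I := by ring


/-- Inequality (4.7): a Poincaré-type inequality on a subspace of finite codimension of
`L²(0,s)`. For every `β > 0` there is a finite-dimensional subspace `F` of `L²(0,s)`
such that every `C¹` function `u` on `[0,s]` orthogonal to `F` satisfies
`∫₀ˢ |u|² ≤ β² ∫₀ˢ |u'|²`. -/
theorem stmt8 (s : ℝ) (hs : 0 < s) (β : ℝ) (hβ : 0 < β) :
    ∃ F : Submodule ℂ (Lp ℂ 2 (volume.restrict (Set.Ioo (0 : ℝ) s))),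
      FiniteDimensional ℂ F ∧
      ∀ u : ℝ → ℂ, ContDiffOn ℝ 1 u (Set.Icc 0 s) →
        (∀ g : Lp ℂ 2 (volume.restrict (Set.Ioo (0 : ℝ) s)), g ∈ F →
          ∫ t in Set.Ioo (0 : ℝ) s, u t * (starRingEnd ℂ) (g t) = 0) →
        ∫ t in Set.Ioo (0 : ℝ) s, ‖u t‖ ^ 2
          ≤ β ^ 2 * ∫ t in Set.Ioo (0 : ℝ) s, ‖derivWithin u (Set.Icc 0 s) t‖ ^ 2 := by
  set μ := volume.restrict (Set.Ioo (0 : ℝ) s) with hμ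
  set N := ⌈s / β⌉₊ with hNdef
  have hNpos : 0 < N := Nat.ceil_pos.mpr (div_pos hs hβ)
  have hNR : (0:ℝ) < N := by exact_mod_cast hNpos
  set h := s / N with hh
  have hhpos : 0 < h := div_pos hs hNR
  have hNh : (N:ℝ) * h = s := by rw [hh]; field_simp
  have hhβ : h ≤ β := by
    rw [hh, div_le_iff₀ hNR]
    calc s = β * (s / β) := by field_simp
      _ ≤ β * N := by gcongr; exact Nat.le_ceil _
  set a : ℕ → ℝ := fun k => k * h with ha
  have ha0 : ∀ k : ℕ, 0 ≤ a k := fun k => mul_nonneg (Nat.cast_nonneg k) hhpos.le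
  have haN : ∀ k : ℕ, k ≤ N → a k ≤ s := fun k hk => by
    rw [← hNh]; exact mul_le_mul_of_nonneg_right (by exact_mod_cast hk) hhpos.le
  have halt : ∀ k : ℕ, a k < a (k + 1) := fun k => by
    simp only [ha]; push_cast; nlinarith
  have hstep : ∀ k : ℕ, a (k + 1) - a k = h := fun k => by
    simp only [ha]; push_cast; ring
  have hsubI : ∀ k : ℕ, k < N → Set.Ioo (a k) (a (k + 1)) ⊆ Set.Ioo 0 s := fun k hk =>
    Set.Ioo_subset_Ioo (ha0 k) (haN (k + 1) hk)
  have hfin : ∀ k : ℕ, μ (Set.Ioo (a k) (a (k + 1))) ≠ ⊤ := fun k => by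
    rw [hμ, Measure.restrict_apply measurableSet_Ioo]
    exact ne_of_lt (lt_of_le_of_lt (measure_mono Set.inter_subset_left) measure_Ioo_lt_top)
  set g : Fin N → Lp ℂ 2 μ := fun k =>
    indicatorConstLp 2 (measurableSet_Ioo (a := a k) (b := a (k + 1))) (hfin k) (1 : ℂ)
    with hg
  refine ⟨Submodule.span ℂ (Set.range g), ?_, ?_⟩
  · exact FiniteDimensional.span_of_finite ℂ (Set.finite_range g)
  · intro u huC hF
    set u' := derivWithin u (Set.Icc 0 s) with hu'
    have hucont : ContinuousOn u (Set.Icc 0 s) := huC.continuousOn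
    have hu'cont : ContinuousOn u' (Set.Icc 0 s) :=
      huC.continuousOn_derivWithin (uniqueDiffOn_Icc hs) le_rfl
    -- orthogonality gives zero mean on each subinterval
    have hmean : ∀ k : ℕ, k < N → ∫ t in Set.Ioo (a k) (a (k + 1)), u t = 0 := by
      intro k hk
      have hmem : g ⟨k, hk⟩ ∈ Submodule.span ℂ (Set.range g) :=
        Submodule.subset_span (Set.mem_range_self _)
      have h0 := hF (g ⟨k, hk⟩) hmem
      have hcoe : (g ⟨k, hk⟩ : ℝ → ℂ) =ᵐ[μ]
          (Set.Ioo (a k) (a (k + 1))).indicator (fun _ => (1 : ℂ)) :=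
        indicatorConstLp_coeFn
      have heq : ∫ t in Set.Ioo (0:ℝ) s, u t * (starRingEnd ℂ) ((g ⟨k, hk⟩ : ℝ → ℂ) t)
          = ∫ t, (Set.Ioo (a k) (a (k + 1))).indicator u t ∂μ := by
        refine integral_congr_ae ?_
        filter_upwards [hcoe] with t ht
        rw [ht]
        by_cases hts : t ∈ Set.Ioo (a k) (a (k + 1)) <;> simp [hts]
      rw [heq, integral_indicator measurableSet_Ioo, hμ,
        Measure.restrict_restrict measurableSet_Ioo,
        Set.inter_eq_left.2 (hsubI k hk)] at h0
      exact h0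
    -- per-interval estimate
    have hkey : ∀ k : ℕ, k < N →
        ∫ t in Set.Ioo (a k) (a (k + 1)), ‖u t‖ ^ 2
          ≤ β ^ 2 * ∫ t in Set.Ioo (a k) (a (k + 1)), ‖u' t‖ ^ 2 := by
      intro k hk
      have h1 := piece s u huC (a k) (a (k + 1)) (ha0 k) (haN (k + 1) hk) (halt k)
        (hmean k hk)
      rw [hstep k] at h1
      refine h1.trans ?_
      have hint : 0 ≤ ∫ t in Set.Ioo (a k) (a (k + 1)), ‖u' t‖ ^ 2 :=
        setIntegral_nonneg measurableSet_Ioo fun t _ => sq_nonneg _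
      exact mul_le_mul_of_nonneg_right (pow_le_pow_left₀ hhpos.le hhβ 2) hint
    -- integrability on subintervals
    have huIcc : ∀ k : ℕ, k < N → Set.uIcc (a k) (a (k + 1)) ⊆ Set.Icc 0 s := by
      intro k hk
      rw [Set.uIcc_of_le (halt k).le]
      exact Set.Icc_subset_Icc (ha0 k) (haN (k + 1) hk)
    have hii1 : ∀ k < N, IntervalIntegrable (fun t => ‖u t‖ ^ 2) volume (a k) (a (k + 1)) :=
      fun k hk => ((hucont.norm.pow 2).mono (huIcc k hk)).intervalIntegrable
    have hii2 : ∀ k < N, IntervalIntegrable (fun t => ‖u' t‖ ^ 2) volume (a k) (a (k + 1)) :=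
      fun k hk => ((hu'cont.norm.pow 2).mono (huIcc k hk)).intervalIntegrable
    have ha0' : a 0 = 0 := by simp [ha]
    have haN' : a N = s := by simp only [ha]; exact hNh
    have hsum1 := intervalIntegral.sum_integral_adjacent_intervals (a := a) (n := N) hii1
    have hsum2 := intervalIntegral.sum_integral_adjacent_intervals (a := a) (n := N) hii2
    rw [ha0', haN'] at hsum1 hsum2
    have hoo : ∀ (c d : ℝ) (f : ℝ → ℝ), c ≤ d →
        (∫ t in c..d, f t) = ∫ t in Set.Ioo c d, f t := fun c d f hcd => by
      rw [intervalIntegral.integral_of_le hcd, integral_Ioc_eq_integral_Ioo]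
    calc ∫ t in Set.Ioo (0:ℝ) s, ‖u t‖ ^ 2
        = ∫ t in (0:ℝ)..s, ‖u t‖ ^ 2 := (hoo 0 s _ hs.le).symm
      _ = ∑ k ∈ Finset.range N, ∫ t in a k..a (k + 1), ‖u t‖ ^ 2 := hsum1.symm
      _ ≤ ∑ k ∈ Finset.range N, β ^ 2 * ∫ t in Set.Ioo (a k) (a (k + 1)), ‖u' t‖ ^ 2 := by
          refine Finset.sum_le_sum fun k hk => ?_
          have hk' := Finset.mem_range.mp hk
          rw [hoo _ _ _ (halt k).le]
          exact hkey k hk'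
      _ = β ^ 2 * ∑ k ∈ Finset.range N, ∫ t in a k..a (k + 1), ‖u' t‖ ^ 2 := by
          rw [Finset.mul_sum]
          exact Finset.sum_congr rfl fun k hk => by rw [hoo _ _ _ (halt k).le]
      _ = β ^ 2 * ∫ t in (0:ℝ)..s, ‖u' t‖ ^ 2 := by rw [hsum2]
      _ = β ^ 2 * ∫ t in Set.Ioo (0:ℝ) s, ‖u' t‖ ^ 2 := by rw [hoo 0 s _ hs.le]
end
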